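/- Let W ⊆ ℝⁿ be a linear subspace, b ∈ ℝⁿ, a ∈ W, and r > 0 with β := ‖Π_{W^⊥} b‖₂² ≤ r². Define λ = min{1, √((r² − β)/‖a − Π_W b‖₂²)} (taking λ = 1 if a = Π_W b), and a' = λ a + (1 − λ) Π_W b. Then a' is the closest point in {w ∈ W : ‖w − b‖₂ ≤ r} to a. -/

import Mathlib

set_option maxHeartbeats 800000


open scoped Classical RealInnerProductSpace

/-- The rescaling step of the algorithms computes the projection onto the intersection of the
subspace `W` with the ball of radius `r` around `b`. -/
theorem rescale_is_projection (n : ℕ)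
    (W : Submodule ℝ (EuclideanSpace ℝ (Fin n)))
    (b : EuclideanSpace ℝ (Fin n)) (a : EuclideanSpace ℝ (Fin n)) (ha : a ∈ W)
    (r β : ℝ) (hr : 0 < r)
    (hβ : β = ‖(Submodule.orthogonalProjectionOnto Wᗮ b : EuclideanSpace ℝ (Fin n))‖ ^ 2)
    (hβr : β ≤ r ^ 2)
    (lam : ℝ)
    (hlam : lam = if a = (Submodule.orthogonalProjectionOnto W b : EuclideanSpace ℝ (Fin n)) then 1
      else min 1 (Real.sqrt ((r ^ 2 - β) /
        ‖a - (Submodule.orthogonalProjectionOnto W b : EuclideanSpace ℝ (Fin n))‖ ^ 2)))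
    (a' : EuclideanSpace ℝ (Fin n))
    (ha' : a' = lam • a + (1 - lam) • (Submodule.orthogonalProjectionOnto W b : EuclideanSpace ℝ (Fin n))) :
    (a' ∈ W ∧ ‖a' - b‖ ≤ r) ∧
      ∀ w : EuclideanSpace ℝ (Fin n), w ∈ W → ‖w - b‖ ≤ r → ‖a - a'‖ ≤ ‖a - w‖ := by
  set p : EuclideanSpace ℝ (Fin n) := (Submodule.orthogonalProjectionOnto W b : EuclideanSpace ℝ (Fin n)) with hp
  set q : EuclideanSpace ℝ (Fin n) := (Submodule.orthogonalProjectionOnto Wᗮ b : EuclideanSpace ℝ (Fin n)) with hq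
  have hpq : p + q = b := Submodule.starProjection_add_starProjection_orthogonal (K := W) b
  have hpW : p ∈ W := (Submodule.orthogonalProjectionOnto W b).2
  have hqW : q ∈ Wᗮ := (Submodule.orthogonalProjectionOnto Wᗮ b).2
  have hrb : 0 ≤ r ^ 2 - β := by linarith
  -- Pythagoras
  have key : ∀ w : EuclideanSpace ℝ (Fin n), w ∈ W → ‖w - b‖ ^ 2 = ‖w - p‖ ^ 2 + β := by
    intro w hw
    have h1 : w - b = (w - p) + (-q) := by rw [← hpq]; abel
    have h2 : inner ℝ (w - p) (-q) = (0:ℝ) := by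
      rw [inner_neg_right, (Submodule.mem_orthogonal W q).mp hqW _ (W.sub_mem hw hpW)]
      ring
    rw [h1, @norm_add_sq_real, h2, norm_neg, hβ]
    ring
  -- a' - p = lam • (a - p)
  have hap : a' - p = lam • (a - p) := by
    rw [ha', smul_sub]
    module
  have hlam0 : 0 ≤ lam := by
    rw [hlam]; split
    · norm_num
    · exact le_min (by norm_num) (Real.sqrt_nonneg _)
  have hlam1 : lam ≤ 1 := by
    rw [hlam]; split
    · norm_num
    · exact min_le_left _ _
  set D : ℝ := ‖a - p‖ with hD
  have hD0 : 0 ≤ D := norm_nonneg _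
  have hnap : ‖a' - p‖ = lam * D := by
    rw [hap, norm_smul, Real.norm_eq_abs, abs_of_nonneg hlam0]
  -- feasibility bound: (lam * D)^2 ≤ r^2 - β
  have hfeas : (lam * D) ^ 2 ≤ r ^ 2 - β := by
    by_cases hap0 : a = p
    · have : D = 0 := by rw [hD, hap0, sub_self, norm_zero]
      rw [this]; nlinarith
    · have hDpos : 0 < D := by
        rw [hD]
        exact norm_sub_pos_iff.mpr hap0
      have hlam' : lam ≤ Real.sqrt ((r ^ 2 - β) / D ^ 2) := by
        rw [hlam, if_neg hap0]
        exact min_le_right _ _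
      have hsq : Real.sqrt ((r ^ 2 - β) / D ^ 2) = Real.sqrt (r ^ 2 - β) / D := by
        rw [Real.sqrt_div hrb, Real.sqrt_sq hD0]
      have : lam * D ≤ Real.sqrt (r ^ 2 - β) := by
        rw [hsq] at hlam'
        calc lam * D ≤ (Real.sqrt (r ^ 2 - β) / D) * D := by
              exact mul_le_mul_of_nonneg_right hlam' hD0
          _ = Real.sqrt (r ^ 2 - β) := by field_simp
      have h2 := Real.sq_sqrt hrb
      nlinarith [mul_nonneg hlam0 hD0, Real.sqrt_nonneg (r ^ 2 - β)]
  have ha'W : a' ∈ W := by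
    rw [ha']
    exact W.add_mem (W.smul_mem _ ha) (W.smul_mem _ hpW)
  have hfeasnorm : ‖a' - b‖ ≤ r := by
    have h1 := key a' ha'W
    rw [hnap] at h1
    nlinarith [norm_nonneg (a' - b)]
  refine ⟨⟨ha'W, hfeasnorm⟩, ?_⟩
  intro w hw hwr
  by_cases hl1 : lam = 1
  · have : a' = a := by rw [ha', hl1]; module
    rw [this, sub_self, norm_zero]
    exact norm_nonneg _
  · -- lam = sqrt((r^2-β)/D^2) < 1
    have hap0 : a ≠ p := by
      intro h; rw [hlam, if_pos h] at hl1; exact hl1 rfl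
    have hDpos : 0 < D := norm_sub_pos_iff.mpr hap0
    have hlameq : lam = Real.sqrt ((r ^ 2 - β) / D ^ 2) := by
      rw [hlam, if_neg hap0]
      rw [hlam, if_neg hap0] at hl1
      rcases min_cases 1 (Real.sqrt ((r ^ 2 - β) / D ^ 2)) with ⟨h, _⟩ | ⟨h, _⟩
      · exact absurd h hl1
      · exact h
    have hsq : Real.sqrt ((r ^ 2 - β) / D ^ 2) = Real.sqrt (r ^ 2 - β) / D := by
      rw [Real.sqrt_div hrb, Real.sqrt_sq hDpos.le]
    have hlamD : lam * D = Real.sqrt (r ^ 2 - β) := by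
      rw [hlameq, hsq]; field_simp
    -- ‖a - a'‖ = (1 - lam) * D = D - sqrt(r^2 - β)
    have haa' : ‖a - a'‖ = D - Real.sqrt (r ^ 2 - β) := by
      have : a - a' = (1 - lam) • (a - p) := by rw [ha']; module
      rw [this, norm_smul, Real.norm_eq_abs, abs_of_nonneg (by linarith), ← hD]
      rw [sub_mul, one_mul, hlamD]
    -- ‖w - p‖ ≤ sqrt(r^2 - β)
    have hwp : ‖w - p‖ ≤ Real.sqrt (r ^ 2 - β) := by
      have h1 := key w hw
      have h3 : ‖w - b‖ ^ 2 ≤ r ^ 2 := pow_le_pow_left₀ (norm_nonneg _) hwr 2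
      have h2 : ‖w - p‖ ^ 2 ≤ r ^ 2 - β := by linarith
      exact (Real.le_sqrt (norm_nonneg _) hrb).mpr h2
    have htri : D ≤ ‖a - w‖ + ‖w - p‖ := by
      calc D = ‖(a - w) + (w - p)‖ := by rw [hD]; congr 1; abel
        _ ≤ ‖a - w‖ + ‖w - p‖ := norm_add_le _ _
    rw [haa']
    linarith
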